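/- Let u ∈ L¹_loc(ℝ²;ℝⁿ), Λ > 0, and suppose every point of a set J ⊂ ℝ² is an approximate jump point of u with jump states bounded by M and with shock speed bounded in absolute value by Λ/2 (i.e. for each (τ,ξ) ∈ J there are u⁻ ≠ u⁺ ∈ B_M and |λ| ≤ Λ/2 such that the blow-up of u at (τ,ξ) converges in the averaged L¹ sense to the single-jump profile with these data). Then J can be covered by countably many graphs of Lipschitz functions x = φ_ℓ(t), ℓ ∈ ℕ, each with Lipschitz constant at most Λ. -/

import Mathlib

open MeasureTheory Set Filter Topology

/-- The open disk in the (t,x)-plane with center `c` and radius `ρ`. -/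
def disk (c : ℝ × ℝ) (ρ : ℝ) : Set (ℝ × ℝ) :=
  {p | (p.1 - c.1)^2 + (p.2 - c.2)^2 < ρ^2}

lemma measurableSet_disk (c : ℝ × ℝ) (ρ : ℝ) : MeasurableSet (disk c ρ) :=
  measurableSet_lt (by fun_prop) (by fun_prop)

lemma disk_subset_closedBall (c : ℝ × ℝ) (ρ : ℝ) :
    disk c ρ ⊆ Metric.closedBall c |ρ| := by
  intro p hp
  have hp' : (p.1 - c.1)^2 + (p.2 - c.2)^2 < |ρ|^2 := by
    have := sq_abs ρ; have hp'' : (p.1 - c.1)^2 + (p.2 - c.2)^2 < ρ^2 := hp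
    linarith
  have hρ : (0:ℝ) ≤ |ρ| := abs_nonneg ρ
  have h1 : |p.1 - c.1| ≤ |ρ| := by
    rw [abs_le]
    constructor <;> nlinarith [sq_nonneg (p.2 - c.2), sq_nonneg (p.1 - c.1 + |ρ|),
      sq_nonneg (p.1 - c.1 - |ρ|)]
  have h2 : |p.2 - c.2| ≤ |ρ| := by
    rw [abs_le]
    constructor <;> nlinarith [sq_nonneg (p.1 - c.1), sq_nonneg (p.2 - c.2 + |ρ|),
      sq_nonneg (p.2 - c.2 - |ρ|)]
  rw [Metric.mem_closedBall, Prod.dist_eq]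
  exact max_le (by rwa [Real.dist_eq]) (by rwa [Real.dist_eq])

lemma volume_disk_lt_top (c : ℝ × ℝ) (ρ : ℝ) : volume (disk c ρ) < ⊤ :=
  lt_of_le_of_lt (measure_mono (disk_subset_closedBall c ρ))
    (isCompact_closedBall c |ρ|).measure_lt_top

lemma mem_disk_abs {c p : ℝ × ℝ} {ρ : ℝ} (hρ : 0 < ρ) (hp : p ∈ disk c ρ) :
    |p.1 - c.1| < ρ ∧ |p.2 - c.2| < ρ := by
  have hp' : (p.1 - c.1)^2 + (p.2 - c.2)^2 < ρ^2 := hp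
  constructor <;> rw [abs_lt] <;> constructor <;>
    nlinarith [sq_nonneg (p.1 - c.1 + ρ), sq_nonneg (p.1 - c.1 - ρ),
      sq_nonneg (p.2 - c.2 + ρ), sq_nonneg (p.2 - c.2 - ρ),
      sq_nonneg (p.1 - c.1), sq_nonneg (p.2 - c.2)]

lemma integrableOn_jump {n : ℕ} (a b l : ℝ) (um up : EuclideanSpace ℝ (Fin n))
    {s : Set (ℝ × ℝ)} (hvol : volume s < ⊤) :
    IntegrableOn (fun p : ℝ × ℝ => if p.2 - b < l * (p.1 - a) then um else up) s := by
  have hm : MeasurableSet {p : ℝ × ℝ | p.2 - b < l * (p.1 - a)} :=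
    measurableSet_lt (by fun_prop) (by fun_prop)
  have heq : (fun p : ℝ × ℝ => if p.2 - b < l * (p.1 - a) then um else up)
      = fun p => ({p : ℝ × ℝ | p.2 - b < l * (p.1 - a)}.indicator (fun _ => um - up)) p + up := by
    funext p
    by_cases h : p.2 - b < l * (p.1 - a) <;>
      simp [Set.indicator_apply, h, mem_setOf_eq, sub_add_cancel]
  rw [heq]
  exact ((integrableOn_const hvol.ne).indicator hm).add
    (integrableOn_const hvol.ne)

lemma integrableOn_of_locallyIntegrable {n : ℕ} {u : ℝ × ℝ → EuclideanSpace ℝ (Fin n)}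
    (hu : LocallyIntegrable u volume) (c : ℝ × ℝ) {ρ : ℝ} (hρ : 0 ≤ ρ) :
    IntegrableOn u (disk c ρ) :=
  (hu.integrableOn_isCompact (isCompact_closedBall c |ρ|)).mono_set
    (disk_subset_closedBall c ρ)

set_option maxHeartbeats 1000000 in
/-- Core analytic lemma: two nearby jump points whose spatial separation exceeds
`Λ` times their temporal separation force a lower bound on `ε`. -/
lemma core {n : ℕ} {Λ : ℝ} (hΛ : 0 < Λ) (u : ℝ × ℝ → EuclideanSpace ℝ (Fin n))
    (hu : LocallyIntegrable u volume)
    (q q' : ℝ × ℝ) (um up um' up' : EuclideanSpace ℝ (Fin n)) (l l' : ℝ)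
    (κ ε η : ℝ) (hκ : 0 < κ) (hε : 0 < ε) (hη : 0 < η)
    (hjump : κ ≤ ‖um' - up'‖) (hl : |l| ≤ Λ/2) (hl' : |l'| ≤ Λ/2)
    (hest : ∀ r : ℝ, 0 < r → r < η → (r^2)⁻¹ *
      (∫ p in disk q r, ‖u p - (if p.2 - q.2 < l * (p.1 - q.1) then um else up)‖) ≤ ε)
    (hest' : ∀ r : ℝ, 0 < r → r < η → (r^2)⁻¹ *
      (∫ p in disk q' r, ‖u p - (if p.2 - q'.2 < l' * (p.1 - q'.1) then um' else up')‖) ≤ ε)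
    (hΔ : Λ * |q'.1 - q.1| < q'.2 - q.2)
    (hsmall : 2 * (|q'.1 - q.1| + (q'.2 - q.2)) < η) :
    κ / (8 * (1 + Λ)) ≤ ε * (1 + (2*(1+Λ)*(4+2*Λ)/Λ)^2) := by
  classical
  set Cc : ℝ := 2*(1+Λ)*(4+2*Λ)/Λ with hCc
  set Δt : ℝ := q'.1 - q.1 with hΔt
  set Δx : ℝ := q'.2 - q.2 with hΔxd
  clear_value Cc Δt Δx
  have hΔx0 : 0 < Δx := lt_of_le_of_lt (mul_nonneg hΛ.le (abs_nonneg _)) hΔ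
  have h4Λ : (0:ℝ) < 4 + 2*Λ := by linarith only [hΛ]
  have h1Λ : (0:ℝ) < 1 + Λ := by linarith only [hΛ]
  have hT0 : (0:ℝ) ≤ |Δt| := abs_nonneg _
  set ρ : ℝ := Δx / (4 + 2*Λ) with hρdef
  set r : ℝ := 2 * (|Δt| + Δx) with hrdef
  clear_value ρ r
  have hρ0 : 0 < ρ := by rw [hρdef]; exact div_pos hΔx0 h4Λ
  have hr0 : 0 < r := by rw [hrdef]; linarith only [hT0, hΔx0]
  have hρΔx : ρ * (4 + 2*Λ) = Δx := by rw [hρdef]; exact div_mul_cancel₀ _ h4Λ.ne'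
  have hρ4 : 4 * ρ ≤ Δx := by linarith only [hρΔx, mul_nonneg hΛ.le hρ0.le]
  have hTle : Λ * |Δt| < Δx := hΔ
  have hrη : r < η := hsmall
  have hρr : ρ < r := by rw [hrdef]; linarith only [hρ4, hT0, hΔx0, hρ0]
  have hρη : ρ < η := lt_trans hρr hrη
  have hρΔxΛ : Λ * (ρ * (4 + 2*Λ)) = Λ * Δx := by rw [hρΔx]
  have hrC : r ≤ Cc * ρ := by
    rw [hrdef, hCc, div_mul_eq_mul_div, le_div_iff₀ hΛ]
    linarith only [hTle, hρΔx, hρΔxΛ]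
  -- geometric inclusions
  have hsub1 : disk q' ρ ⊆ disk q r := by
    intro p hp
    obtain ⟨h1, h2⟩ := mem_disk_abs hρ0 hp
    have a1 := abs_lt.mp h1
    have a2 := abs_lt.mp h2
    have b1 := le_abs_self Δt
    have b2 := neg_abs_le Δt
    have e1 : (p.1 - q.1 : ℝ) = (p.1 - q'.1) + Δt := by rw [hΔt]; ring
    have e2 : (p.2 - q.2 : ℝ) = (p.2 - q'.2) + Δx := by rw [hΔxd]; ring
    show (p.1 - q.1)^2 + (p.2 - q.2)^2 < r^2
    rw [e1, e2, hrdef]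
    have ha2 : (p.1 - q'.1)^2 < ρ^2 := by nlinarith only [a1.1, a1.2]
    have hb2 : (p.2 - q'.2)^2 < ρ^2 := by nlinarith only [a2.1, a2.2]
    have key1 : (p.1 - q'.1 + Δt)^2 ≤ 2*(p.1 - q'.1)^2 + 2*Δt^2 := by
      nlinarith only [sq_nonneg (p.1 - q'.1 - Δt)]
    have key2 : (p.2 - q'.2 + Δx)^2 ≤ 2*(p.2 - q'.2)^2 + 2*Δx^2 := by
      nlinarith only [sq_nonneg (p.2 - q'.2 - Δx)]
    have hΔt2 : Δt^2 = |Δt|^2 := (sq_abs Δt).symm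
    have hρ2Δ : ρ^2 ≤ (Δx/4)^2 := by
      have h16 := mul_le_mul hρ4 hρ4 (by linarith only [hρ0]) (by linarith only [hρ0, hρ4])
      nlinarith only [h16]
    linarith only [key1, key2, hΔt2, ha2, hb2, hρ2Δ, mul_nonneg hT0 hΔx0.le,
      mul_pos hΔx0 hΔx0, sq_nonneg (|Δt|)]
  have hside : ∀ p ∈ disk q' ρ, ¬ (p.2 - q.2 < l * (p.1 - q.1)) := by
    intro p hp
    obtain ⟨h1, h2⟩ := mem_disk_abs hρ0 hp
    have e1 : l * (p.1 - q.1) = l * (p.1 - q'.1) + l * Δt := by rw [hΔt]; ring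
    have f1 : l * (p.1 - q'.1) ≤ (Λ/2) * ρ := by
      calc l * (p.1 - q'.1) ≤ |l * (p.1 - q'.1)| := le_abs_self _
        _ = |l| * |p.1 - q'.1| := abs_mul _ _
        _ ≤ (Λ/2) * ρ := mul_le_mul hl h1.le (abs_nonneg _) (by linarith)
    have f2 : l * Δt ≤ Δx / 2 := by
      calc l * Δt ≤ |l * Δt| := le_abs_self _
        _ = |l| * |Δt| := abs_mul _ _
        _ ≤ (Λ/2) * |Δt| := mul_le_mul_of_nonneg_right hl hT0
        _ ≤ Δx / 2 := by linarith
    have f3 : -ρ < p.2 - q'.2 := (abs_lt.mp h2).1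
    have e2 : (p.2 - q.2 : ℝ) = (p.2 - q'.2) + Δx := by rw [hΔxd]; ring
    intro hlt
    rw [e1] at hlt
    rw [e2] at hlt
    linarith only [hlt, f1, f2, f3, hρΔx, mul_nonneg hΛ.le hρ0.le, hρ0]
  -- rectangles
  set w : ℝ := ρ / (4*(1+Λ)) with hwdef
  clear_value w
  have hw0 : 0 < w := by rw [hwdef]; exact div_pos hρ0 (by linarith only [h1Λ])
  have hwρ : w * (4*(1+Λ)) = ρ := by
    rw [hwdef]; exact div_mul_cancel₀ _ (by linarith only [h1Λ] : (0:ℝ) < 4*(1+Λ)).ne'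
  have hw4 : 4 * w ≤ ρ := by linarith only [hwρ, mul_nonneg hΛ.le hw0.le]
  have hwΛ : Λ * w ≤ ρ / 4 := by linarith only [hwρ, hw0]
  set Rm : Set (ℝ × ℝ) := Ioo (q'.1 - w) (q'.1 + w) ×ˢ Ioo (q'.2 - ρ/2) (q'.2 - ρ/4)
    with hRmd
  set Rp : Set (ℝ × ℝ) := Ioo (q'.1 - w) (q'.1 + w) ×ˢ Ioo (q'.2 + ρ/4) (q'.2 + ρ/2)
    with hRpd
  have hRmM : MeasurableSet Rm := measurableSet_Ioo.prod measurableSet_Ioo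
  have hRpM : MeasurableSet Rp := measurableSet_Ioo.prod measurableSet_Ioo
  have hRm_sub : Rm ⊆ disk q' ρ := by
    intro p hp
    obtain ⟨hp1, hp2⟩ := mem_prod.mp hp
    obtain ⟨c1, c2⟩ := mem_Ioo.mp hp1
    obtain ⟨c3, c4⟩ := mem_Ioo.mp hp2
    show (p.1 - q'.1)^2 + (p.2 - q'.2)^2 < ρ^2
    have ha2 : (p.1 - q'.1)^2 < w^2 := by
      nlinarith only [show -w < p.1 - q'.1 by linarith only [c1],
        show p.1 - q'.1 < w by linarith only [c2]]
    have hb2 : (p.2 - q'.2)^2 < (ρ/2)^2 := by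
      nlinarith only [show -(ρ/2) < p.2 - q'.2 by linarith only [c3, hρ0],
        show p.2 - q'.2 < ρ/2 by linarith only [c4, hρ0]]
    have hw2 : w^2 ≤ (ρ/4)^2 := by nlinarith only [hw4, hw0]
    linarith only [ha2, hb2, hw2, mul_pos hρ0 hρ0]
  have hRp_sub : Rp ⊆ disk q' ρ := by
    intro p hp
    obtain ⟨hp1, hp2⟩ := mem_prod.mp hp
    obtain ⟨c1, c2⟩ := mem_Ioo.mp hp1
    obtain ⟨c3, c4⟩ := mem_Ioo.mp hp2
    show (p.1 - q'.1)^2 + (p.2 - q'.2)^2 < ρ^2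
    have ha2 : (p.1 - q'.1)^2 < w^2 := by
      nlinarith only [show -w < p.1 - q'.1 by linarith only [c1],
        show p.1 - q'.1 < w by linarith only [c2]]
    have hb2 : (p.2 - q'.2)^2 < (ρ/2)^2 := by
      nlinarith only [show -(ρ/2) < p.2 - q'.2 by linarith only [c3, hρ0],
        show p.2 - q'.2 < ρ/2 by linarith only [c4, hρ0]]
    have hw2 : w^2 ≤ (ρ/4)^2 := by nlinarith only [hw4, hw0]
    linarith only [ha2, hb2, hw2, mul_pos hρ0 hρ0]
  have hRm_side : ∀ p ∈ Rm, p.2 - q'.2 < l' * (p.1 - q'.1) := by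
    intro p hp
    obtain ⟨hp1, hp2⟩ := mem_prod.mp hp
    obtain ⟨c1, c2⟩ := mem_Ioo.mp hp1
    obtain ⟨c3, c4⟩ := mem_Ioo.mp hp2
    have fa : |l' * (p.1 - q'.1)| ≤ (Λ/2) * w := by
      rw [abs_mul]
      exact mul_le_mul hl' (le_of_lt (abs_lt.mpr ⟨by linarith, by linarith⟩))
        (abs_nonneg _) (by linarith)
    have := neg_abs_le (l' * (p.1 - q'.1))
    linarith only [this, fa, hwΛ, hρ0, c4]
  have hRp_side : ∀ p ∈ Rp, ¬ (p.2 - q'.2 < l' * (p.1 - q'.1)) := by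
    intro p hp
    obtain ⟨hp1, hp2⟩ := mem_prod.mp hp
    obtain ⟨c1, c2⟩ := mem_Ioo.mp hp1
    obtain ⟨c3, c4⟩ := mem_Ioo.mp hp2
    have fa : |l' * (p.1 - q'.1)| ≤ (Λ/2) * w := by
      rw [abs_mul]
      exact mul_le_mul hl' (le_of_lt (abs_lt.mpr ⟨by linarith, by linarith⟩))
        (abs_nonneg _) (by linarith)
    have := le_abs_self (l' * (p.1 - q'.1))
    intro hlt
    linarith only [this, fa, hwΛ, hρ0, c3, hlt]
  have hdisj : Disjoint Rm Rp := by
    rw [Set.disjoint_left]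
    intro p hpm hpp
    have h1 := (mem_Ioo.mp (mem_prod.mp hpm).2).2
    have h2 := (mem_Ioo.mp (mem_prod.mp hpp).2).1
    linarith only [h1, h2, hρ0]
  -- volumes
  have hvolRm : (volume Rm).toReal = 2*w*(ρ/4) := by
    rw [hRmd, Measure.volume_eq_prod, Measure.prod_prod, Real.volume_Ioo, Real.volume_Ioo,
      show q'.1 + w - (q'.1 - w) = 2*w by ring,
      show q'.2 - ρ/4 - (q'.2 - ρ/2) = ρ/4 by ring,
      ← ENNReal.ofReal_mul (by linarith only [hw0])]
    exact ENNReal.toReal_ofReal (by nlinarith only [mul_nonneg hw0.le hρ0.le])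
  have hvolRp : (volume Rp).toReal = 2*w*(ρ/4) := by
    rw [hRpd, Measure.volume_eq_prod, Measure.prod_prod, Real.volume_Ioo, Real.volume_Ioo,
      show q'.1 + w - (q'.1 - w) = 2*w by ring,
      show q'.2 + ρ/2 - (q'.2 + ρ/4) = ρ/4 by ring,
      ← ENNReal.ofReal_mul (by linarith only [hw0])]
    exact ENNReal.toReal_ofReal (by nlinarith only [mul_nonneg hw0.le hρ0.le])
  -- integrability
  have hvd_r := volume_disk_lt_top q r
  have hvd_ρ := volume_disk_lt_top q' ρ
  set U : ℝ × ℝ → EuclideanSpace ℝ (Fin n) :=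
    fun p => if p.2 - q.2 < l * (p.1 - q.1) then um else up with hU
  set U' : ℝ × ℝ → EuclideanSpace ℝ (Fin n) :=
    fun p => if p.2 - q'.2 < l' * (p.1 - q'.1) then um' else up' with hU'
  have hu_r : IntegrableOn u (disk q r) volume :=
    integrableOn_of_locallyIntegrable hu q hr0.le
  have hu_ρ : IntegrableOn u (disk q' ρ) volume :=
    integrableOn_of_locallyIntegrable hu q' hρ0.le
  have hU_r : IntegrableOn U (disk q r) volume := integrableOn_jump q.1 q.2 l um up hvd_r
  have hU_ρ : IntegrableOn U (disk q' ρ) volume := integrableOn_jump q.1 q.2 l um up hvd_ρ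
  have hU'_ρ : IntegrableOn U' (disk q' ρ) volume :=
    integrableOn_jump q'.1 q'.2 l' um' up' hvd_ρ
  have hc_ρ : IntegrableOn (fun _ => up) (disk q' ρ) volume :=
    integrableOn_const hvd_ρ.ne
  have hf1_r : IntegrableOn (fun p => ‖u p - U p‖) (disk q r) volume := (hu_r.sub hU_r).norm
  have hf3_ρ : IntegrableOn (fun p => ‖u p - U' p‖) (disk q' ρ) volume :=
    (hu_ρ.sub hU'_ρ).norm
  have hf2_ρ : IntegrableOn (fun p => ‖u p - up‖) (disk q' ρ) volume := (hu_ρ.sub hc_ρ).norm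
  have hf4_ρ : IntegrableOn (fun p => ‖U' p - up‖) (disk q' ρ) volume :=
    (hU'_ρ.sub hc_ρ).norm
  -- integral estimates
  have I1 : (∫ p in disk q r, ‖u p - U p‖) ≤ ε * r^2 := by
    have h := hest r hr0 hrη
    have h2 : (0:ℝ) < r^2 := pow_pos hr0 2
    calc (∫ p in disk q r, ‖u p - U p‖)
        = r^2 * ((r^2)⁻¹ * (∫ p in disk q r, ‖u p - U p‖)) := by
          rw [← mul_assoc, mul_inv_cancel₀ h2.ne', one_mul]
      _ ≤ r^2 * ε := mul_le_mul_of_nonneg_left h h2.le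
      _ = ε * r^2 := mul_comm _ _
  have I2 : (∫ p in disk q' ρ, ‖u p - U' p‖) ≤ ε * ρ^2 := by
    have h := hest' ρ hρ0 hρη
    have h2 : (0:ℝ) < ρ^2 := pow_pos hρ0 2
    calc (∫ p in disk q' ρ, ‖u p - U' p‖)
        = ρ^2 * ((ρ^2)⁻¹ * (∫ p in disk q' ρ, ‖u p - U' p‖)) := by
          rw [← mul_assoc, mul_inv_cancel₀ h2.ne', one_mul]
      _ ≤ ρ^2 * ε := mul_le_mul_of_nonneg_left h h2.le
      _ = ε * ρ^2 := mul_comm _ _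
  have I3 : (∫ p in disk q' ρ, ‖u p - U p‖) ≤ ∫ p in disk q r, ‖u p - U p‖ :=
    setIntegral_mono_set hf1_r (Eventually.of_forall fun p => norm_nonneg _)
      (HasSubset.Subset.eventuallyLE hsub1)
  have I4 : (∫ p in disk q' ρ, ‖u p - up‖) = ∫ p in disk q' ρ, ‖u p - U p‖ :=
    setIntegral_congr_fun (measurableSet_disk q' ρ) (fun p hp => by
      simp only [hU]
      rw [if_neg (hside p hp)])
  have I5 : (∫ p in disk q' ρ, ‖U' p - up‖) ≤
      (∫ p in disk q' ρ, ‖u p - U' p‖) + ∫ p in disk q' ρ, ‖u p - up‖ := by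
    have step : ∀ p ∈ disk q' ρ, ‖U' p - up‖ ≤ ‖u p - U' p‖ + ‖u p - up‖ := by
      intro p _
      calc ‖U' p - up‖ = ‖(U' p - u p) + (u p - up)‖ := by rw [sub_add_sub_cancel]
        _ ≤ ‖U' p - u p‖ + ‖u p - up‖ := norm_add_le _ _
        _ = ‖u p - U' p‖ + ‖u p - up‖ := by rw [norm_sub_rev]
    calc (∫ p in disk q' ρ, ‖U' p - up‖)
        ≤ ∫ p in disk q' ρ, (‖u p - U' p‖ + ‖u p - up‖) :=
          setIntegral_mono_on hf4_ρ (hf3_ρ.add hf2_ρ) (measurableSet_disk q' ρ) step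
      _ = _ := integral_add hf3_ρ hf2_ρ
  have I6 : (∫ p in Rm ∪ Rp, ‖U' p - up‖) ≤ ∫ p in disk q' ρ, ‖U' p - up‖ :=
    setIntegral_mono_set hf4_ρ (Eventually.of_forall fun p => norm_nonneg _)
      (HasSubset.Subset.eventuallyLE (union_subset hRm_sub hRp_sub))
  have I7 : (∫ p in Rm ∪ Rp, ‖U' p - up‖)
      = (∫ p in Rm, ‖U' p - up‖) + ∫ p in Rp, ‖U' p - up‖ :=
    setIntegral_union hdisj hRpM (hf4_ρ.mono_set hRm_sub) (hf4_ρ.mono_set hRp_sub)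
  have I8 : (∫ p in Rm, ‖U' p - up‖) = 2*w*(ρ/4) * ‖um' - up‖ := by
    rw [setIntegral_congr_fun (f := fun p => ‖U' p - up‖) (g := fun _ => ‖um' - up‖)
      hRmM (fun p hp => by simp only [hU']; rw [if_pos (hRm_side p hp)]),
      setIntegral_const, smul_eq_mul, measureReal_def, hvolRm]
  have I9 : (∫ p in Rp, ‖U' p - up‖) = 2*w*(ρ/4) * ‖up' - up‖ := by
    rw [setIntegral_congr_fun (f := fun p => ‖U' p - up‖) (g := fun _ => ‖up' - up‖)
      hRpM (fun p hp => by simp only [hU']; rw [if_neg (hRp_side p hp)]),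
      setIntegral_const, smul_eq_mul, measureReal_def, hvolRp]
  have htri : κ ≤ ‖um' - up‖ + ‖up' - up‖ := by
    calc κ ≤ ‖um' - up'‖ := hjump
      _ = ‖(um' - up) - (up' - up)‖ := by rw [sub_sub_sub_cancel_right]
      _ ≤ ‖um' - up‖ + ‖up' - up‖ := norm_sub_le _ _
  have hA : (0:ℝ) ≤ 2*w*(ρ/4) := by nlinarith only [mul_nonneg hw0.le hρ0.le]
  have hmain : 2*w*(ρ/4) * κ ≤ ε * r^2 + ε * ρ^2 := by
    calc 2*w*(ρ/4) * κ ≤ 2*w*(ρ/4) * (‖um' - up‖ + ‖up' - up‖) :=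
          mul_le_mul_of_nonneg_left htri hA
      _ = (∫ p in Rm, ‖U' p - up‖) + ∫ p in Rp, ‖U' p - up‖ := by rw [I8, I9]; ring
      _ = ∫ p in Rm ∪ Rp, ‖U' p - up‖ := I7.symm
      _ ≤ ∫ p in disk q' ρ, ‖U' p - up‖ := I6
      _ ≤ (∫ p in disk q' ρ, ‖u p - U' p‖) + ∫ p in disk q' ρ, ‖u p - up‖ := I5
      _ ≤ ε * ρ^2 + ∫ p in disk q' ρ, ‖u p - U p‖ := by rw [I4]; exact add_le_add I2 le_rfl
      _ ≤ ε * ρ^2 + ε * r^2 := add_le_add le_rfl (I3.trans I1)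
      _ = ε * r^2 + ε * ρ^2 := by ring
  -- conclusion
  have hwρ4 : 2*w*(ρ/4) = ρ^2 / (8*(1+Λ)) := by
    rw [eq_div_iff (by linarith only [h1Λ] : (0:ℝ) < 8*(1+Λ)).ne']
    linear_combination ρ * hwρ
  have hr2 : r^2 ≤ Cc^2 * ρ^2 := by
    have h := mul_self_le_mul_self hr0.le hrC
    nlinarith only [h]
  have hρ2' : (0:ℝ) < ρ^2 := pow_pos hρ0 2
  have hρ2 : (0:ℝ) < ρ^2 := pow_pos hρ0 2
  have k3 : κ * ρ^2 = (8*(1+Λ)) * (2*w*(ρ/4) * κ) := by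
    linear_combination (-(κ*ρ)) * hwρ
  have k1 : (8*(1+Λ)) * (2*w*(ρ/4) * κ) ≤ (8*(1+Λ)) * (ε * r^2 + ε * ρ^2) :=
    mul_le_mul_of_nonneg_left hmain (by linarith)
  have k2 : ε * r^2 ≤ ε * (Cc^2 * ρ^2) := mul_le_mul_of_nonneg_left hr2 hε.le
  have k2' : (8*(1+Λ)) * (ε * r^2) ≤ (8*(1+Λ)) * (ε * (Cc^2 * ρ^2)) :=
    mul_le_mul_of_nonneg_left k2 (by linarith)
  have hkey : κ * ρ^2 ≤ (ε * (1 + Cc^2) * (8*(1+Λ))) * ρ^2 := by linarith only [k1, k2', k3]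
  have hfinal : κ ≤ ε * (1 + Cc^2) * (8*(1+Λ)) := le_of_mul_le_mul_right hkey hρ2
  rw [div_le_iff₀ (show (0:ℝ) < 8*(1+Λ) by linarith only [h1Λ])]
  linarith only [hfinal]

/-- The piece of the jump set with jump size `≥ 1/(k+1)`, scale `1/(j+1)`, near `(a,b)`. -/
def piece {n : ℕ} (Λ : ℝ) (u : ℝ × ℝ → EuclideanSpace ℝ (Fin n)) (ε : ℝ) (k j : ℕ)
    (a b : ℚ) : Set (ℝ × ℝ) :=
  {q | (∃ um up : EuclideanSpace ℝ (Fin n), ∃ l : ℝ,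
      (1:ℝ)/(k+1) ≤ ‖um - up‖ ∧ |l| ≤ Λ/2 ∧
      ∀ r : ℝ, 0 < r → r < 1/(j+1) → (r^2)⁻¹ *
        (∫ p in disk q r, ‖u p - (if p.2 - q.2 < l * (p.1 - q.1) then um else up)‖) ≤ ε)
    ∧ |q.1 - (a:ℝ)| < 1/(8*(j+1)) ∧ |q.2 - (b:ℝ)| < 1/(8*(j+1))}

lemma piece_cone {n : ℕ} {Λ : ℝ} (hΛ : 0 < Λ) (u : ℝ × ℝ → EuclideanSpace ℝ (Fin n))
    (hu : LocallyIntegrable u volume) (k j : ℕ) (a b : ℚ) :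
    ∀ p ∈ piece Λ u ((1/(k+1)) / (16*(1+Λ)*(1 + (2*(1+Λ)*(4+2*Λ)/Λ)^2))) k j a b,
    ∀ p' ∈ piece Λ u ((1/(k+1)) / (16*(1+Λ)*(1 + (2*(1+Λ)*(4+2*Λ)/Λ)^2))) k j a b,
      |p'.2 - p.2| ≤ Λ * |p'.1 - p.1| := by
  intro p hp p' hp'
  by_contra hcon
  push_neg at hcon
  have h1Λ : (0:ℝ) < 1 + Λ := by linarith only [hΛ]
  have hκ : (0:ℝ) < 1/((k:ℝ)+1) := by positivity
  have hη : (0:ℝ) < 1/((j:ℝ)+1) := by positivity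
  have hCpos : (0:ℝ) < 1 + (2*(1+Λ)*(4+2*Λ)/Λ)^2 := by positivity
  have hεpos : (0:ℝ) < (1/((k:ℝ)+1)) / (16*(1+Λ)*(1 + (2*(1+Λ)*(4+2*Λ)/Λ)^2)) :=
    div_pos hκ (mul_pos (by linarith only [h1Λ]) hCpos)
  obtain ⟨⟨um, up, l, hk1, hl, hest⟩, hpa, hpb⟩ := hp
  obtain ⟨⟨um', up', l', hk1', hl', hest'⟩, hpa', hpb'⟩ := hp'
  have hd8 : 8 * (1/(8*((j:ℝ)+1))) = 1/((j:ℝ)+1) := by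
    rw [mul_one_div, div_eq_div_iff (by positivity) (by positivity)]
    ring
  have hA := abs_lt.mp hpa
  have hA' := abs_lt.mp hpa'
  have hB := abs_lt.mp hpb
  have hB' := abs_lt.mp hpb'
  have hcontra : ¬ ((1:ℝ)/((k:ℝ)+1) / (8 * (1 + Λ)) ≤
      ((1/((k:ℝ)+1)) / (16*(1+Λ)*(1 + (2*(1+Λ)*(4+2*Λ)/Λ)^2))) *
        (1 + (2*(1+Λ)*(4+2*Λ)/Λ)^2)) := by
    intro hres
    have heq : ((1/((k:ℝ)+1)) / (16*(1+Λ)*(1 + (2*(1+Λ)*(4+2*Λ)/Λ)^2))) *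
        (1 + (2*(1+Λ)*(4+2*Λ)/Λ)^2) = (1/((k:ℝ)+1)) / (16*(1+Λ)) := by
      have hB16 : (0:ℝ) < 16*(1+Λ) := by linarith only [h1Λ]
      have hBC : (0:ℝ) < 16*(1+Λ)*(1 + (2*(1+Λ)*(4+2*Λ)/Λ)^2) := mul_pos hB16 hCpos
      rw [div_mul_eq_mul_div, div_eq_div_iff hBC.ne' hB16.ne']
      ring
    rw [heq] at hres
    rw [div_le_div_iff₀ (by linarith only [h1Λ]) (by linarith only [h1Λ])] at hres
    nlinarith only [hres, hκ, h1Λ]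
  rcases le_total p.2 p'.2 with hsign | hsign
  · have hΔ : Λ * |p'.1 - p.1| < p'.2 - p.2 := by
      rwa [abs_of_nonneg (by linarith only [hsign] : (0:ℝ) ≤ p'.2 - p.2)] at hcon
    have hsmall : 2 * (|p'.1 - p.1| + (p'.2 - p.2)) < 1/((j:ℝ)+1) := by
      have ht : |p'.1 - p.1| < 2 * (1/(8*((j:ℝ)+1))) := by
        rw [abs_lt]; constructor <;> linarith only [hA.1, hA.2, hA'.1, hA'.2]
      have hx : p'.2 - p.2 < 2 * (1/(8*((j:ℝ)+1))) := by
        linarith only [hB.1, hB.2, hB'.1, hB'.2]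
      linarith only [ht, hx, hd8]
    exact hcontra (core hΛ u hu p p' um up um' up' l l' (1/((k:ℝ)+1))
      ((1/((k:ℝ)+1)) / (16*(1+Λ)*(1 + (2*(1+Λ)*(4+2*Λ)/Λ)^2))) (1/((j:ℝ)+1))
      hκ hεpos hη hk1' hl hl' hest hest' hΔ hsmall)
  · have hΔ : Λ * |p.1 - p'.1| < p.2 - p'.2 := by
      rw [abs_sub_comm]
      have : |p'.2 - p.2| = p.2 - p'.2 := by
        rw [abs_sub_comm]; exact abs_of_nonneg (by linarith only [hsign])
      rwa [this] at hcon
    have hsmall : 2 * (|p.1 - p'.1| + (p.2 - p'.2)) < 1/((j:ℝ)+1) := by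
      have ht : |p.1 - p'.1| < 2 * (1/(8*((j:ℝ)+1))) := by
        rw [abs_lt]; constructor <;> linarith only [hA.1, hA.2, hA'.1, hA'.2]
      have hx : p.2 - p'.2 < 2 * (1/(8*((j:ℝ)+1))) := by
        linarith only [hB.1, hB.2, hB'.1, hB'.2]
      linarith only [ht, hx, hd8]
    exact hcontra (core hΛ u hu p' p um' up' um up l' l (1/((k:ℝ)+1))
      ((1/((k:ℝ)+1)) / (16*(1+Λ)*(1 + (2*(1+Λ)*(4+2*Λ)/Λ)^2))) (1/((j:ℝ)+1))
      hκ hεpos hη hk1 hl' hl hest' hest hΔ hsmall)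

/-- A set satisfying a cone condition is contained in a Lipschitz graph. -/
lemma cover_graph {Λ : ℝ} (hΛ : 0 ≤ Λ) (S : Set (ℝ × ℝ))
    (hS : ∀ p ∈ S, ∀ p' ∈ S, |p'.2 - p.2| ≤ Λ * |p'.1 - p.1|) :
    ∃ φ : ℝ → ℝ, LipschitzWith Λ.toNNReal φ ∧ ∀ p ∈ S, p.2 = φ p.1 := by
  classical
  set f : ℝ → ℝ := fun t => if h : ∃ x, (t, x) ∈ S then h.choose else 0 with hf
  have hfS : ∀ p ∈ S, f p.1 = p.2 := by
    intro p hp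
    have h : ∃ x, (p.1, x) ∈ S := ⟨p.2, by simpa using hp⟩
    have hc : (p.1, h.choose) ∈ S := h.choose_spec
    have h0 : |h.choose - p.2| ≤ 0 := by simpa using hS p hp (p.1, h.choose) hc
    have h1 : h.choose = p.2 := by
      have := abs_nonpos_iff.mp (h0)
      linarith [sub_eq_zero.mp this]
    simp only [hf]
    rw [dif_pos h, h1]
  have hlip : LipschitzOnWith Λ.toNNReal f (Prod.fst '' S) := by
    rw [lipschitzOnWith_iff_dist_le_mul]
    rintro x ⟨p, hp, rfl⟩ y ⟨p', hp', rfl⟩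
    rw [Real.dist_eq, Real.dist_eq, hfS p hp, hfS p' hp']
    have h := hS p' hp' p hp
    calc |p.2 - p'.2| ≤ Λ * |p.1 - p'.1| := h
      _ = (Λ.toNNReal : ℝ) * |p.1 - p'.1| := by rw [Real.coe_toNNReal Λ hΛ]
  obtain ⟨g, hg, hgf⟩ := hlip.extend_real
  exact ⟨g, hg, fun p hp => by rw [← hgf ⟨p, hp, rfl⟩, hfS p hp]⟩

/-- A set of approximate jump points with uniformly bounded states and speeds can be
covered by countably many Lipschitz graphs. -/
theorem stmt17 (n : ℕ) (Λ M : ℝ) (hΛ : 0 < Λ) (hM : 0 < M)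
    (u : ℝ × ℝ → EuclideanSpace ℝ (Fin n)) (hu : LocallyIntegrable u volume)
    (J : Set (ℝ × ℝ))
    (hJ : ∀ q ∈ J, ∃ (um up : EuclideanSpace ℝ (Fin n)) (l : ℝ),
      um ≠ up ∧ ‖um‖ ≤ M ∧ ‖up‖ ≤ M ∧ |l| ≤ Λ/2 ∧
      Tendsto (fun r : ℝ => (r^2)⁻¹ *
          ∫ p in disk q r, ‖u p - (if p.2 - q.2 < l * (p.1 - q.1) then um else up)‖)
        (𝓝[>] 0) (𝓝 0)) :
    ∃ φ : ℕ → ℝ → ℝ, (∀ ℓ, LipschitzWith Λ.toNNReal (φ ℓ)) ∧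
      J ⊆ ⋃ ℓ, {p : ℝ × ℝ | p.2 = φ ℓ p.1} := by
  classical
  have hgraph : ∀ i : ℕ × ℕ × ℚ × ℚ, ∃ φ : ℝ → ℝ, LipschitzWith Λ.toNNReal φ ∧
      ∀ p ∈ piece Λ u ((1/(i.1+1)) / (16*(1+Λ)*(1 + (2*(1+Λ)*(4+2*Λ)/Λ)^2))) i.1 i.2.1
          i.2.2.1 i.2.2.2, p.2 = φ p.1 :=
    fun i => cover_graph hΛ.le _ (piece_cone hΛ u hu i.1 i.2.1 i.2.2.1 i.2.2.2)
  choose ψ hψ1 hψ2 using hgraph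
  refine ⟨fun ℓ => ((Encodable.decode (α := ℕ × ℕ × ℚ × ℚ) ℓ).map ψ).getD (fun _ => 0),
    ?_, ?_⟩
  · intro ℓ
    cases h : Encodable.decode (α := ℕ × ℕ × ℚ × ℚ) ℓ with
    | none => simpa [h] using (LipschitzWith.const (0:ℝ)).weaken zero_le
    | some i => simpa [h] using hψ1 i
  intro q hq
  obtain ⟨um, up, l, hne, _, _, hl, hT⟩ := hJ q hq
  have hpos : 0 < ‖um - up‖ := by
    rw [norm_sub_pos_iff]; exact hne
  obtain ⟨k, hk⟩ := exists_nat_one_div_lt hpos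
  have hεpos : 0 < (1/((k:ℝ)+1)) / (16*(1+Λ)*(1 + (2*(1+Λ)*(4+2*Λ)/Λ)^2)) := by positivity
  have hev : ∀ᶠ r in 𝓝[>] (0:ℝ), (fun r : ℝ => (r^2)⁻¹ *
      ∫ p in disk q r, ‖u p - (if p.2 - q.2 < l * (p.1 - q.1) then um else up)‖) r
      < (1/((k:ℝ)+1)) / (16*(1+Λ)*(1 + (2*(1+Λ)*(4+2*Λ)/Λ)^2)) :=
    hT.eventually_lt_const hεpos
  obtain ⟨δ, hδ0, hδ⟩ := mem_nhdsGT_iff_exists_Ioo_subset.mp hev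
  obtain ⟨j, hj⟩ := exists_nat_one_div_lt (show (0:ℝ) < δ from hδ0)
  set d : ℝ := 1/(8*((j:ℝ)+1)) with hd
  have hd0 : 0 < d := by positivity
  obtain ⟨a, ha1, ha2⟩ := exists_rat_btwn (show q.1 - d < q.1 by linarith)
  obtain ⟨b, hb1, hb2⟩ := exists_rat_btwn (show q.2 - d < q.2 by linarith)
  have hmem : q ∈ piece Λ u ((1/((k:ℝ)+1)) / (16*(1+Λ)*(1 + (2*(1+Λ)*(4+2*Λ)/Λ)^2)))
      k j a b := by
    refine ⟨⟨um, up, l, le_of_lt hk, hl, fun r hr0 hr1 => ?_⟩, ?_, ?_⟩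
    · have hrδ : r ∈ Ioo (0:ℝ) δ := ⟨hr0, lt_trans hr1 hj⟩
      exact le_of_lt (hδ hrδ)
    · rw [abs_lt]; constructor <;> [linarith; linarith]
    · rw [abs_lt]; constructor <;> [linarith; linarith]
  refine mem_iUnion.mpr ⟨Encodable.encode ((k, j, a, b) : ℕ × ℕ × ℚ × ℚ), ?_⟩
  show q.2 = ((Encodable.decode (α := ℕ × ℕ × ℚ × ℚ)
      (Encodable.encode ((k, j, a, b) : ℕ × ℕ × ℚ × ℚ))).map ψ).getD (fun _ => 0) q.1
  rw [Encodable.encodek]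
  exact hψ2 (k, j, a, b) q hmem
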